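/- Fix a ∈ (0,1). There exists a finite constant C (depending only on α and a) such that for all ε ∈ (0,1): ∫₀^{ε^a} s^{(α−1)/α} ( ∫_ℝ ( p_{s+ε}(y) − p_s(y) )² dy ) ds ≤ C ε^{2a(α−1)/α}. -/

import Mathlib

open MeasureTheory Real

/-- The symmetric α-stable heat kernel on ℝ:
`p_t(x) = (2π)⁻¹ ∫ cos(ξx) e^{−t|ξ|^α/2} dξ`. -/
noncomputable def stableKernel (α t x : ℝ) : ℝ :=
  (2 * Real.pi)⁻¹ * ∫ ξ : ℝ, Real.cos (ξ * x) * Real.exp (-(t * |ξ| ^ α) / 2)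

open Set Filter Topology

namespace StableAux

lemma integrable_even {f : ℝ → ℝ} (he : ∀ x, f (-x) = f x)
    (hf : IntegrableOn f (Set.Ioi 0)) : Integrable f := by
  have int_Iic : IntegrableOn f (Set.Iic 0) := by
    rw [← Measure.map_neg_eq_self (volume : Measure ℝ)]
    have m : MeasurableEmbedding fun x : ℝ => -x :=
      (Homeomorph.neg ℝ).measurableEmbedding
    rw [m.integrableOn_map_iff]
    have : (fun x : ℝ => f (-x)) = f := funext he
    simp_rw [Function.comp_def, he, neg_preimage, neg_Iic, neg_zero]
    exact Iff.mpr integrableOn_Ici_iff_integrableOn_Ioi hf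
  have := int_Iic.union hf
  rwa [Set.Iic_union_Ioi, integrableOn_univ] at this

lemma integrable_rpow_mul_kernel {α c t : ℝ} (hα : 1 ≤ α) (hc : -1 < c) (ht : 0 < t) :
    Integrable (fun ξ : ℝ => |ξ| ^ c * Real.exp (-(t * |ξ| ^ α) / 2)) := by
  apply integrable_even (fun x => by simp)
  have h := integrableOn_rpow_mul_exp_neg_mul_rpow (p := α) hc (by linarith) (by positivity : (0:ℝ) < t / 2)
  apply h.congr_fun ?_ measurableSet_Ioi
  intro x hx
  simp only
  rw [abs_of_pos hx]
  ring_nf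

lemma integrable_kernel {α t : ℝ} (hα : 1 ≤ α) (ht : 0 < t) :
    Integrable (fun ξ : ℝ => Real.exp (-(t * |ξ| ^ α) / 2)) := by
  have h := integrable_rpow_mul_kernel (c := 0) hα (by norm_num) ht
  simpa using h

lemma integral_cos_mul_gaussian {δ : ℝ} (hδ : 0 < δ) (u : ℝ) :
    ∫ y : ℝ, Real.cos (u * y) * Real.exp (-δ * y ^ 2)
      = Real.sqrt (π / δ) * Real.exp (-u ^ 2 / (4 * δ)) := by
  have hb : (0:ℝ) < ((δ:ℂ)).re := by simpa using hδ
  have h := fourierIntegral_gaussian hb (u : ℂ)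
  have hint : Integrable (fun x : ℝ => Complex.exp (Complex.I * u * x) * Complex.exp (-(δ:ℂ) * x ^ 2)) := by
    have := integrable_cexp_quadratic hb (Complex.I * u) 0
    apply this.congr
    filter_upwards with x
    rw [← Complex.exp_add]
    ring_nf
  have hre : ∫ x : ℝ, (Complex.exp (Complex.I * u * x) * Complex.exp (-(δ:ℂ) * x ^ 2)).re
      = (((π : ℂ) / δ) ^ (1 / 2 : ℂ) * Complex.exp (-(u:ℂ) ^ 2 / (4 * (δ:ℂ)))).re := by
    rw [← h]
    exact integral_re hint
  have lhs_eq : ∀ x : ℝ,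
      (Complex.exp (Complex.I * u * x) * Complex.exp (-(δ:ℂ) * x ^ 2)).re
        = Real.cos (u * x) * Real.exp (-δ * x ^ 2) := by
    intro x
    have h1 : Complex.exp (-(δ:ℂ) * x ^ 2) = (Real.exp (-δ * x ^ 2) : ℂ) := by
      rw [Complex.ofReal_exp]
      norm_cast
    have h2 : Complex.I * u * x = ((u * x : ℝ) : ℂ) * Complex.I := by
      push_cast; ring
    rw [h2, h1, Complex.mul_re, Complex.exp_ofReal_mul_I_re, Complex.exp_ofReal_mul_I_im,
      Complex.ofReal_re, Complex.ofReal_im]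
    ring
  simp only [lhs_eq] at hre
  rw [hre]
  have h3 : ((π : ℂ) / δ) ^ (1 / 2 : ℂ) = ((Real.sqrt (π / δ) : ℝ) : ℂ) := by
    rw [Real.sqrt_eq_rpow]
    have e1 : ((π:ℂ) / δ) = ((π / δ : ℝ) : ℂ) := by push_cast; ring
    have e2 : (1 / 2 : ℂ) = ((1 / 2 : ℝ) : ℂ) := by norm_num
    rw [e1, e2, ← Complex.ofReal_cpow (by positivity)]
  have h4 : Complex.exp (-(u:ℂ) ^ 2 / (4 * (δ:ℂ))) = ((Real.exp (-u ^ 2 / (4 * δ)) : ℝ) : ℂ) := by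
    rw [Complex.ofReal_exp]
    norm_cast
  rw [h3, h4, ← Complex.ofReal_mul, Complex.ofReal_re]

lemma cos_prod (A B : ℝ) : Real.cos A * Real.cos B = (Real.cos (A - B) + Real.cos (A + B)) / 2 := by
  rw [Real.cos_sub, Real.cos_add]; ring

noncomputable def GK (δ u : ℝ) : ℝ := Real.sqrt (π / δ) * Real.exp (-u ^ 2 / (4 * δ))

lemma GK_nonneg (hδ : 0 < δ) (u : ℝ) : 0 ≤ GK δ u := by
  unfold GK; positivity

lemma GK_integrable (hδ : 0 < δ) : Integrable (GK δ) := by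
  have h : Integrable fun u : ℝ => Real.sqrt (π / δ) * Real.exp (-(1 / (4 * δ)) * u ^ 2) :=
    (integrable_exp_neg_mul_sq (by positivity)).const_mul _
  apply h.congr
  filter_upwards with u
  unfold GK
  congr 1
  ring_nf

lemma GK_integral (hδ : 0 < δ) : ∫ u : ℝ, GK δ u = 2 * π := by
  have h : ∫ u : ℝ, GK δ u = Real.sqrt (π / δ) * ∫ u : ℝ, Real.exp (-(1 / (4 * δ)) * u ^ 2) := by
    rw [← integral_const_mul]
    congr 1; funext u; unfold GK; congr 1; ring_nf
  rw [h, integral_gaussian, ← Real.sqrt_mul (by positivity)]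
  have : π / δ * (π / (1 / (4 * δ))) = (2 * π) ^ 2 := by
    field_simp; ring
  rw [this, Real.sqrt_sq (by positivity)]

noncomputable def gdiff (α s ε ξ : ℝ) : ℝ :=
  Real.exp (-(s * |ξ| ^ α) / 2) - Real.exp (-((s + ε) * |ξ| ^ α) / 2)

section
variable {α s ε δ : ℝ}

lemma gdiff_nonneg (hs : 0 ≤ s) (hε : 0 ≤ ε) (ξ : ℝ) : 0 ≤ gdiff α s ε ξ := by
  unfold gdiff
  have h : s * |ξ| ^ α ≤ (s + ε) * |ξ| ^ α :=
    mul_le_mul_of_nonneg_right (by linarith) (Real.rpow_nonneg (abs_nonneg _) _)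
  have := Real.exp_le_exp.mpr (by linarith : -((s + ε) * |ξ| ^ α) / 2 ≤ -(s * |ξ| ^ α) / 2)
  linarith

lemma gdiff_le_one (hs : 0 ≤ s) (ξ : ℝ) : gdiff α s ε ξ ≤ 1 := by
  unfold gdiff
  have h1 : Real.exp (-(s * |ξ| ^ α) / 2) ≤ 1 := by
    apply Real.exp_le_one_iff.mpr
    have : 0 ≤ s * |ξ| ^ α := mul_nonneg hs (Real.rpow_nonneg (abs_nonneg _) _)
    linarith
  have h2 : 0 < Real.exp (-((s + ε) * |ξ| ^ α) / 2) := Real.exp_pos _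
  linarith

lemma gdiff_continuous (hα : 1 ≤ α) : Continuous (gdiff α s ε) := by
  have habs : Continuous fun ξ : ℝ => |ξ| ^ α :=
    continuous_abs.rpow_const (fun x => Or.inr (by linarith))
  unfold gdiff
  exact (((continuous_const.mul habs).neg.div_const 2).rexp).sub
    (((continuous_const.mul (habs : Continuous fun ξ : ℝ => |ξ| ^ α)).neg.div_const 2).rexp)

lemma gdiff_integrable (hα : 1 ≤ α) (hs : 0 < s) (hε : 0 < ε) :
    Integrable (gdiff α s ε) :=
  (integrable_kernel hα hs).sub (integrable_kernel hα (by linarith))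

/-- Key mollified Plancherel-type bound. -/

lemma mollified_bound (hα : 1 ≤ α) (hs : 0 < s) (hε : 0 < ε) (hδ : 0 < δ) :
    ∫ y : ℝ, Real.exp (-δ * y ^ 2) * (∫ ξ : ℝ, Real.cos (ξ * y) * gdiff α s ε ξ) ^ 2
      ≤ 2 * π * ∫ ξ : ℝ, gdiff α s ε ξ := by
  set g := gdiff α s ε with hg
  have hg0 : ∀ ξ, 0 ≤ g ξ := gdiff_nonneg hs.le hε.le
  have hg1 : ∀ ξ, g ξ ≤ 1 := gdiff_le_one hs.le
  have hgc : Continuous g := gdiff_continuous hα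
  have hgi : Integrable g := gdiff_integrable hα hs hε
  -- the integrand on the product space
  set F : ℝ × ℝ × ℝ → ℝ :=
    fun q => Real.exp (-δ * q.1 ^ 2) *
      ((Real.cos (q.2.1 * q.1) * g q.2.1) * (Real.cos (q.2.2 * q.1) * g q.2.2)) with hF
  have hFc : Continuous F := by
    apply (continuous_const.mul (continuous_fst.pow 2)).rexp.mul
    apply Continuous.mul
    · exact (Real.continuous_cos.comp (continuous_snd.fst.mul continuous_fst)).mul
        (hgc.comp continuous_snd.fst)
    · exact (Real.continuous_cos.comp (continuous_snd.snd.mul continuous_fst)).mul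
        (hgc.comp continuous_snd.snd)
  have hmaj : Integrable (fun q : ℝ × ℝ × ℝ => Real.exp (-δ * q.1 ^ 2) * (g q.2.1 * g q.2.2))
      (volume.prod (volume : Measure (ℝ × ℝ))) := by
    have h2 : Integrable (fun p : ℝ × ℝ => g p.1 * g p.2) ((volume : Measure ℝ).prod volume) :=
      hgi.mul_prod hgi
    have h1 := (integrable_exp_neg_mul_sq hδ).mul_prod h2
    rw [← Measure.volume_eq_prod] at h1 h2 ⊢
    exact h1
  have hFi : Integrable F (volume.prod (volume : Measure (ℝ × ℝ))) := by
    apply hmaj.mono' hFc.aestronglyMeasurable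
    · filter_upwards with q
      have hb : |Real.cos (q.2.1 * q.1) * g q.2.1 * (Real.cos (q.2.2 * q.1) * g q.2.2)|
          ≤ g q.2.1 * g q.2.2 := by
        rw [abs_mul, abs_mul, abs_mul]
        calc |Real.cos (q.2.1 * q.1)| * |g q.2.1| * (|Real.cos (q.2.2 * q.1)| * |g q.2.2|)
            ≤ 1 * |g q.2.1| * (1 * |g q.2.2|) := by
              apply mul_le_mul
              · exact mul_le_mul (Real.abs_cos_le_one _) le_rfl (abs_nonneg _) zero_le_one
              · exact mul_le_mul (Real.abs_cos_le_one _) le_rfl (abs_nonneg _) zero_le_one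
              · positivity
              · positivity
          _ = g q.2.1 * g q.2.2 := by
              rw [abs_of_nonneg (hg0 _), abs_of_nonneg (hg0 _)]; ring
      have : ‖F q‖ = Real.exp (-δ * q.1 ^ 2) *
          |Real.cos (q.2.1 * q.1) * g q.2.1 * (Real.cos (q.2.2 * q.1) * g q.2.2)| := by
        rw [hF]; simp only [Real.norm_eq_abs, abs_mul, abs_of_pos (Real.exp_pos _)]
      rw [this]
      exact mul_le_mul_of_nonneg_left hb (Real.exp_pos _).le
  -- Step 1: rewrite LHS as iterated integral
  have step1 : ∀ y : ℝ, Real.exp (-δ * y ^ 2) * (∫ ξ : ℝ, Real.cos (ξ * y) * g ξ) ^ 2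
      = ∫ p : ℝ × ℝ, F (y, p) := by
    intro y
    have e1 : (∫ ξ : ℝ, Real.cos (ξ * y) * g ξ) ^ 2
        = ∫ p : ℝ × ℝ, (Real.cos (p.1 * y) * g p.1) * (Real.cos (p.2 * y) * g p.2) := by
      rw [sq, Measure.volume_eq_prod]
      exact (integral_prod_mul (fun ξ : ℝ => Real.cos (ξ * y) * g ξ)
        (fun ξ : ℝ => Real.cos (ξ * y) * g ξ)).symm
    rw [e1, ← integral_const_mul]
  have step2 : ∫ y : ℝ, Real.exp (-δ * y ^ 2) * (∫ ξ : ℝ, Real.cos (ξ * y) * g ξ) ^ 2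
      = ∫ p : ℝ × ℝ, ∫ y : ℝ, F (y, p) := by
    simp_rw [step1]
    exact integral_integral_swap hFi
  -- Step 3: evaluate the inner integral
  have intCos : ∀ u : ℝ, Integrable (fun y : ℝ => Real.cos (u * y) * Real.exp (-δ * y ^ 2)) := by
    intro u
    exact (integrable_exp_neg_mul_sq hδ).bdd_mul
      (Real.continuous_cos.comp (continuous_const.mul continuous_id)).aestronglyMeasurable
      (c := 1) (ae_of_all _ fun x => by simpa using Real.abs_cos_le_one (u * x))
  have step3 : ∀ p : ℝ × ℝ, (∫ y : ℝ, F (y, p))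
      = g p.1 * g p.2 * ((GK δ (p.1 - p.2) + GK δ (p.1 + p.2)) / 2) := by
    intro p
    have e2 : ∀ y : ℝ, F (y, p) = (g p.1 * g p.2) *
        ((Real.cos ((p.1 - p.2) * y) * Real.exp (-δ * y ^ 2)
          + Real.cos ((p.1 + p.2) * y) * Real.exp (-δ * y ^ 2)) / 2) := by
      intro y
      rw [hF]
      simp only
      have : Real.cos (p.1 * y) * Real.cos (p.2 * y)
          = (Real.cos ((p.1 - p.2) * y) + Real.cos ((p.1 + p.2) * y)) / 2 := by
        rw [sub_mul, add_mul]
        exact cos_prod _ _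
      linear_combination (Real.exp (-δ * y ^ 2) * g p.1 * g p.2) * this
    simp_rw [e2]
    rw [integral_const_mul]
    congr 1
    rw [integral_div, integral_add (intCos _) (intCos _),
      integral_cos_mul_gaussian hδ, integral_cos_mul_gaussian hδ]
    rfl
  rw [step2]
  simp_rw [step3]
  -- Step 5: the comparison function
  set R : ℝ × ℝ → ℝ := fun p => g p.2 * ((GK δ (p.1 - p.2) + GK δ (p.1 + p.2)) / 2) with hR
  have hGKc : Continuous (GK δ) := by
    unfold GK
    exact continuous_const.mul (((continuous_id.pow 2).neg.div_const _).rexp)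
  have hslice_int : ∀ η : ℝ, Integrable (fun ξ : ℝ => (GK δ (ξ - η) + GK δ (ξ + η)) / 2) := by
    intro η
    exact (((GK_integrable hδ).comp_sub_right η).add ((GK_integrable hδ).comp_add_right η)).div_const 2
  have hslice : ∀ η : ℝ, (∫ ξ : ℝ, R (ξ, η)) = (2 * π) * g η := by
    intro η
    rw [hR]
    simp only
    rw [integral_const_mul, integral_div, integral_add ((GK_integrable hδ).comp_sub_right η)
      ((GK_integrable hδ).comp_add_right η), integral_sub_right_eq_self (GK δ) η,
      integral_add_right_eq_self (GK δ) η, GK_integral hδ]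
    ring
  have hRnonneg : ∀ p : ℝ × ℝ, 0 ≤ R p := by
    intro p
    apply mul_nonneg (hg0 _)
    have := GK_nonneg hδ (p.1 - p.2)
    have := GK_nonneg hδ (p.1 + p.2)
    positivity
  have hRc : Continuous R :=
    (hgc.comp continuous_snd).mul
      (((hGKc.comp (continuous_fst.sub continuous_snd)).add
        (hGKc.comp (continuous_fst.add continuous_snd))).div_const 2)
  have hRi : Integrable R := by
    rw [Measure.volume_eq_prod]
    rw [integrable_prod_iff' hRc.aestronglyMeasurable]
    constructor
    · filter_upwards with η
      exact (hslice_int η).const_mul (g η)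
    · apply Integrable.congr (hgi.const_mul (2 * π))
      filter_upwards with η
      rw [← hslice η]
      rw [integral_congr_ae]
      filter_upwards with ξ
      rw [Real.norm_eq_abs, abs_of_nonneg (hRnonneg (ξ, η))]
  -- Step 6: comparison
  have step6 : (∫ p : ℝ × ℝ, g p.1 * g p.2 * ((GK δ (p.1 - p.2) + GK δ (p.1 + p.2)) / 2))
      ≤ ∫ p : ℝ × ℝ, R p := by
    apply integral_mono_of_nonneg ?_ hRi ?_
    · filter_upwards with p
      have h1 := GK_nonneg hδ (p.1 - p.2)
      have h2 := GK_nonneg hδ (p.1 + p.2)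
      have h3 := hg0 p.1
      have h4 := hg0 p.2
      positivity
    · filter_upwards with p
      rw [hR]
      simp only
      apply mul_le_mul_of_nonneg_right (mul_le_of_le_one_left (hg0 _) (hg1 _))
      have h1 := GK_nonneg hδ (p.1 - p.2)
      have h2 := GK_nonneg hδ (p.1 + p.2)
      positivity
  -- Step 7: evaluate ∫ R
  have step7 : (∫ p : ℝ × ℝ, R p) = 2 * π * ∫ ξ : ℝ, g ξ := by
    rw [Measure.volume_eq_prod] at hRi ⊢
    rw [integral_prod_symm _ hRi]
    calc (∫ η : ℝ, ∫ ξ : ℝ, R (ξ, η)) = ∫ η : ℝ, (2 * π) * g η := by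
          congr 1; funext η; exact hslice η
      _ = 2 * π * ∫ ξ : ℝ, g ξ := integral_const_mul _ _
  calc _ ≤ ∫ p : ℝ × ℝ, R p := step6
    _ = 2 * π * ∫ ξ : ℝ, g ξ := step7

lemma inner_bound (hα : 1 ≤ α) (hs : 0 < s) (hε : 0 < ε) :
    ∫ y : ℝ, (stableKernel α (s + ε) y - stableKernel α s y) ^ 2
      ≤ (2 * π)⁻¹ * ∫ ξ : ℝ, gdiff α s ε ξ := by
  set g := gdiff α s ε with hgdef
  have hg0 : ∀ ξ, 0 ≤ g ξ := gdiff_nonneg hs.le hε.le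
  have hgc : Continuous g := gdiff_continuous hα
  have hgi : Integrable g := gdiff_integrable hα hs hε
  have hgI0 : 0 ≤ ∫ ξ, g ξ := integral_nonneg hg0
  set h : ℝ → ℝ := fun y => ∫ ξ : ℝ, Real.cos (ξ * y) * g ξ with hh
  have hintc : ∀ (t : ℝ), 0 < t → ∀ y : ℝ,
      Integrable (fun ξ : ℝ => Real.cos (ξ * y) * Real.exp (-(t * |ξ| ^ α) / 2)) := by
    intro t ht y
    exact (integrable_kernel hα ht).bdd_mul
      (Real.continuous_cos.comp (continuous_id.mul continuous_const)).aestronglyMeasurable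
      (c := 1) (ae_of_all _ fun x => by simpa using Real.abs_cos_le_one (x * y))
  have hintcg : ∀ y : ℝ, Integrable (fun ξ : ℝ => Real.cos (ξ * y) * g ξ) := by
    intro y
    exact hgi.bdd_mul
      (Real.continuous_cos.comp (continuous_id.mul continuous_const)).aestronglyMeasurable
      (c := 1) (ae_of_all _ fun x => by simpa using Real.abs_cos_le_one (x * y))
  have hdiff : ∀ y : ℝ, stableKernel α (s + ε) y - stableKernel α s y = -((2 * π)⁻¹ * h y) := by
    intro y
    unfold stableKernel
    rw [← mul_sub, ← integral_sub (hintc (s + ε) (by linarith) y) (hintc s hs y), hh]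
    simp only
    have e : (fun ξ : ℝ => Real.cos (ξ * y) * Real.exp (-((s + ε) * |ξ| ^ α) / 2)
        - Real.cos (ξ * y) * Real.exp (-(s * |ξ| ^ α) / 2))
        = fun ξ : ℝ => -(Real.cos (ξ * y) * g ξ) := by
      funext ξ
      rw [hgdef]
      unfold gdiff
      ring
    rw [e, integral_neg]
    ring
  have hsq : ∀ y : ℝ, (stableKernel α (s + ε) y - stableKernel α s y) ^ 2
      = ((2 * π)⁻¹) ^ 2 * h y ^ 2 := by
    intro y; rw [hdiff]; ring
  have hhc : Continuous h := by
    rw [hh]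
    apply continuous_of_dominated (bound := g)
    · intro y
      exact ((Real.continuous_cos.comp (continuous_id.mul continuous_const)).mul
        hgc).aestronglyMeasurable
    · intro y
      filter_upwards with ξ
      rw [Real.norm_eq_abs, abs_mul]
      calc |Real.cos (ξ * y)| * |g ξ| ≤ 1 * |g ξ| :=
            mul_le_mul_of_nonneg_right (Real.abs_cos_le_one _) (abs_nonneg _)
        _ = g ξ := by rw [one_mul, abs_of_nonneg (hg0 ξ)]
    · exact hgi
    · filter_upwards with ξ
      exact (Real.continuous_cos.comp (continuous_const.mul continuous_id)).mul continuous_const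
  have hhbd : ∀ y : ℝ, |h y| ≤ ∫ ξ, g ξ := by
    intro y
    rw [hh]
    simp only
    calc |∫ ξ : ℝ, Real.cos (ξ * y) * g ξ| = ‖∫ ξ : ℝ, Real.cos (ξ * y) * g ξ‖ :=
          (Real.norm_eq_abs _).symm
      _ ≤ ∫ ξ : ℝ, ‖Real.cos (ξ * y) * g ξ‖ := norm_integral_le_integral_norm _
      _ ≤ ∫ ξ : ℝ, g ξ := by
          apply integral_mono (hintcg y).norm hgi
          intro ξ
          show ‖Real.cos (ξ * y) * g ξ‖ ≤ g ξ
          rw [Real.norm_eq_abs, abs_mul]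
          calc |Real.cos (ξ * y)| * |g ξ| ≤ 1 * |g ξ| :=
                mul_le_mul_of_nonneg_right (Real.abs_cos_le_one _) (abs_nonneg _)
            _ = g ξ := by rw [one_mul, abs_of_nonneg (hg0 ξ)]
  set D : ℝ → ℝ := fun y => ((2 * π)⁻¹) ^ 2 * h y ^ 2 with hD
  have hDc : Continuous D := continuous_const.mul (hhc.pow 2)
  have hD0 : ∀ y, 0 ≤ D y := fun y => by rw [hD]; positivity
  have hDbd : ∀ y, D y ≤ ((2 * π)⁻¹) ^ 2 * (∫ ξ, g ξ) ^ 2 := by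
    intro y
    rw [hD]
    simp only
    apply mul_le_mul_of_nonneg_left ?_ (by positivity)
    rw [← sq_abs (h y)]
    apply pow_le_pow_left₀ (abs_nonneg _) (hhbd y)
  have key : ∀ δ : ℝ, 0 < δ → ∫ y : ℝ, Real.exp (-δ * y ^ 2) * D y ≤ (2 * π)⁻¹ * ∫ ξ, g ξ := by
    intro δ hδ
    have h1 : ∫ y : ℝ, Real.exp (-δ * y ^ 2) * D y
        = ((2 * π)⁻¹) ^ 2 * ∫ y : ℝ, Real.exp (-δ * y ^ 2) * h y ^ 2 := by
      rw [← integral_const_mul]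
      congr 1; funext y; rw [hD]; ring
    rw [h1]
    have h2 := mollified_bound hα hs hε hδ
    calc ((2 * π)⁻¹) ^ 2 * ∫ y : ℝ, Real.exp (-δ * y ^ 2) * h y ^ 2
        ≤ ((2 * π)⁻¹) ^ 2 * (2 * π * ∫ ξ, g ξ) := by
          apply mul_le_mul_of_nonneg_left h2 (by positivity)
      _ = (2 * π)⁻¹ * ∫ ξ, g ξ := by
          have hπ : (2 * π) ≠ 0 := by positivity
          field_simp
  -- monotone convergence
  have goal_eq : ∫ y : ℝ, (stableKernel α (s + ε) y - stableKernel α s y) ^ 2 = ∫ y : ℝ, D y := by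
    congr 1; funext y; rw [hsq y, hD]
  rw [goal_eq]
  set M : ℝ := (2 * π)⁻¹ * ∫ ξ, g ξ with hM
  have hM0 : 0 ≤ M := by rw [hM]; positivity
  rw [integral_eq_lintegral_of_nonneg_ae (ae_of_all _ hD0) hDc.aestronglyMeasurable]
  suffices hl : (∫⁻ y : ℝ, ENNReal.ofReal (D y)) ≤ ENNReal.ofReal M by
    calc (∫⁻ y : ℝ, ENNReal.ofReal (D y)).toReal ≤ (ENNReal.ofReal M).toReal :=
          ENNReal.toReal_mono ENNReal.ofReal_ne_top hl
      _ = M := ENNReal.toReal_ofReal hM0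
  set Fn : ℕ → ℝ → ENNReal := fun n y =>
    ENNReal.ofReal (Real.exp (-(1 / (n + 1 : ℝ)) * y ^ 2) * D y) with hFn
  have hδn : ∀ n : ℕ, (0:ℝ) < 1 / (n + 1 : ℝ) := fun n => by positivity
  have hFn_meas : ∀ n, AEMeasurable (Fn n) := by
    intro n
    apply ENNReal.measurable_ofReal.comp_aemeasurable
    exact ((continuous_const.mul (continuous_id.pow 2)).rexp.mul hDc).measurable.aemeasurable
  have hmono : ∀ y : ℝ, Monotone fun n => Fn n y := by
    intro y
    apply monotone_nat_of_le_succ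
    intro n
    apply ENNReal.ofReal_le_ofReal
    apply mul_le_mul_of_nonneg_right ?_ (hD0 y)
    apply Real.exp_le_exp.mpr
    have h1 : (1 : ℝ) / (n + 1 + 1) ≤ 1 / (n + 1) := by
      apply one_div_le_one_div_of_le (by positivity)
      push_cast; linarith
    push_cast
    nlinarith [sq_nonneg y]
  have htend : ∀ y : ℝ, Tendsto (fun n => Fn n y) atTop (𝓝 (ENNReal.ofReal (D y))) := by
    intro y
    apply Filter.Tendsto.comp (ENNReal.continuous_ofReal.tendsto _)
    have h1 : Tendsto (fun n : ℕ => (1 : ℝ) / (n + 1)) atTop (𝓝 0) :=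
      tendsto_one_div_add_atTop_nhds_zero_nat
    have h2 : Tendsto (fun n : ℕ => Real.exp (-(1 / (n + 1 : ℝ)) * y ^ 2)) atTop (𝓝 1) := by
      have h3 : Tendsto (fun n : ℕ => -(1 / (n + 1 : ℝ)) * y ^ 2) atTop (𝓝 0) := by
        have := (h1.neg).mul_const (y ^ 2)
        simpa using this
      have := (Real.continuous_exp.tendsto 0).comp h3
      simpa [Function.comp_def] using this
    have := h2.mul_const (D y)
    simpa using this
  have hconv := lintegral_tendsto_of_tendsto_of_monotone hFn_meas
    (ae_of_all _ hmono) (ae_of_all _ htend)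
  apply le_of_tendsto hconv
  filter_upwards with n
  have hInt : Integrable (fun y : ℝ => Real.exp (-(1 / (n + 1 : ℝ)) * y ^ 2) * D y) := by
    apply Integrable.mono' (g := fun y : ℝ =>
      (((2 * π)⁻¹) ^ 2 * (∫ ξ, g ξ) ^ 2) * Real.exp (-(1 / (n + 1 : ℝ)) * y ^ 2))
      ((integrable_exp_neg_mul_sq (hδn n)).const_mul _)
      ((continuous_const.mul (continuous_id.pow 2)).rexp.mul hDc).aestronglyMeasurable
    filter_upwards with y
    rw [Real.norm_eq_abs]
    change |Real.exp (-(1 / (n + 1 : ℝ)) * y ^ 2) * D y| ≤ _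
    rw [abs_of_nonneg (mul_nonneg (Real.exp_pos _).le (hD0 y))]
    calc Real.exp (-(1 / (n + 1 : ℝ)) * y ^ 2) * D y
        ≤ Real.exp (-(1 / (n + 1 : ℝ)) * y ^ 2) * (((2 * π)⁻¹) ^ 2 * (∫ ξ, g ξ) ^ 2) :=
          mul_le_mul_of_nonneg_left (hDbd y) (Real.exp_pos _).le
      _ = (((2 * π)⁻¹) ^ 2 * (∫ ξ, g ξ) ^ 2) * Real.exp (-(1 / (n + 1 : ℝ)) * y ^ 2) := by ring
  rw [hFn]
  simp only
  rw [← ofReal_integral_eq_lintegral_ofReal hInt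
    (ae_of_all _ fun y => mul_nonneg (Real.exp_pos _).le (hD0 y))]
  exact ENNReal.ofReal_le_ofReal (key _ (hδn n))

end

lemma one_sub_exp_le {θ x : ℝ} (hθ0 : 0 ≤ θ) (hθ1 : θ ≤ 1) (hx : 0 ≤ x) :
    1 - Real.exp (-x) ≤ x ^ θ := by
  rcases le_or_gt x 1 with hx1 | hx1
  · have h1 : 1 - x ≤ Real.exp (-x) := by
      have := Real.add_one_le_exp (-x)
      linarith
    have h2 : x ^ (1:ℝ) ≤ x ^ θ := Real.rpow_le_rpow_of_exponent_ge' hx hx1 hθ0 hθ1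
    rw [Real.rpow_one] at h2
    linarith
  · have h1 : (1:ℝ) = x ^ (0:ℝ) := (Real.rpow_zero x).symm
    have h2 : x ^ (0:ℝ) ≤ x ^ θ := Real.rpow_le_rpow_of_exponent_le hx1.le hθ0
    have h3 : 0 < Real.exp (-x) := Real.exp_pos _
    rw [Real.rpow_zero] at h2
    linarith

lemma gdiff_le {α s ε : ℝ} (hα1 : 1 < α) (hα2 : α ≤ 2) (hs : 0 ≤ s) (hε : 0 ≤ ε) (ξ : ℝ) :
    gdiff α s ε ξ ≤ (ε / 2) ^ ((α - 1) / α) * (|ξ| ^ (α - 1) * Real.exp (-(s * |ξ| ^ α) / 2)) := by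
  have hα0 : (0:ℝ) < α := by linarith
  set θ := (α - 1) / α with hθ
  have hθ0 : 0 ≤ θ := div_nonneg (by linarith) (by linarith)
  have hθ1 : θ ≤ 1 := by
    rw [hθ, div_le_one hα0]; linarith
  set r := |ξ| ^ α with hr
  have hr0 : 0 ≤ r := Real.rpow_nonneg (abs_nonneg _) _
  have e1 : gdiff α s ε ξ = Real.exp (-(s * r) / 2) * (1 - Real.exp (-(ε * r / 2))) := by
    unfold gdiff
    rw [mul_sub, mul_one, ← Real.exp_add]
    congr 2
    ring
  rw [e1]
  have e2 : (1 - Real.exp (-(ε * r / 2))) ≤ (ε * r / 2) ^ θ :=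
    one_sub_exp_le hθ0 hθ1 (by positivity)
  have e3 : (ε * r / 2) ^ θ = (ε / 2) ^ θ * r ^ θ := by
    rw [← Real.mul_rpow (by positivity) hr0]
    congr 1
    ring
  have e4 : r ^ θ = |ξ| ^ (α - 1) := by
    rw [hr, ← Real.rpow_mul (abs_nonneg _)]
    congr 1
    rw [hθ]
    field_simp
  calc Real.exp (-(s * r) / 2) * (1 - Real.exp (-(ε * r / 2)))
      ≤ Real.exp (-(s * r) / 2) * (ε * r / 2) ^ θ :=
        mul_le_mul_of_nonneg_left e2 (Real.exp_pos _).le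
    _ = (ε / 2) ^ θ * (|ξ| ^ (α - 1) * Real.exp (-(s * r) / 2)) := by
        rw [e3, e4]; ring

lemma scaled_integral {α s : ℝ} (hα1 : 1 < α) (hα2 : α ≤ 2) (hs : 0 < s) :
    ∫ ξ : ℝ, |ξ| ^ (α - 1) * Real.exp (-(s * |ξ| ^ α) / 2)
      = (∫ u : ℝ, |u| ^ (α - 1) * Real.exp (-(1 * |u| ^ α) / 2)) / s := by
  have hα0 : (0:ℝ) < α := by linarith
  set a : ℝ := s ^ (-α⁻¹) with ha
  have ha0 : 0 < a := Real.rpow_pos_of_pos hs _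
  have haα : a ^ α = s⁻¹ := by
    rw [ha, ← Real.rpow_mul hs.le]
    rw [show -α⁻¹ * α = -1 by field_simp]
    exact Real.rpow_neg_one s
  have key := Measure.integral_comp_mul_left
    (fun ξ : ℝ => |ξ| ^ (α - 1) * Real.exp (-(s * |ξ| ^ α) / 2)) a
  have e1 : (fun x : ℝ => |a * x| ^ (α - 1) * Real.exp (-(s * |a * x| ^ α) / 2))
      = fun x : ℝ => a ^ (α - 1) * (|x| ^ (α - 1) * Real.exp (-(1 * |x| ^ α) / 2)) := by
    funext x
    rw [abs_mul, abs_of_pos ha0, Real.mul_rpow ha0.le (abs_nonneg _),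
      Real.mul_rpow ha0.le (abs_nonneg _), haα]
    have : s * (s⁻¹ * |x| ^ α) = 1 * |x| ^ α := by
      field_simp
    rw [this]
    ring
  rw [e1] at key
  rw [integral_const_mul] at key
  -- key : a^(α-1) * ∫ u, base u = |a⁻¹| • ∫ f
  rw [abs_of_pos (by positivity : (0:ℝ) < a⁻¹), smul_eq_mul] at key
  have e2 : ∫ ξ : ℝ, |ξ| ^ (α - 1) * Real.exp (-(s * |ξ| ^ α) / 2)
      = a * (a ^ (α - 1) * ∫ u : ℝ, |u| ^ (α - 1) * Real.exp (-(1 * |u| ^ α) / 2)) := by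
    rw [key]
    field_simp
  rw [e2]
  have e3 : a * a ^ (α - 1) = s⁻¹ := by
    nth_rewrite 1 [← Real.rpow_one a]
    rw [← Real.rpow_add ha0, show (1:ℝ) + (α - 1) = α by ring, haα]
  rw [← mul_assoc, e3]
  field_simp

lemma gdiff_integral_le {α s ε : ℝ} (hα1 : 1 < α) (hα2 : α ≤ 2) (hs : 0 < s) (hε : 0 < ε) :
    ∫ ξ : ℝ, gdiff α s ε ξ
      ≤ (ε / 2) ^ ((α - 1) / α) *
        ((∫ u : ℝ, |u| ^ (α - 1) * Real.exp (-(1 * |u| ^ α) / 2)) / s) := by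
  have hint : Integrable (fun ξ : ℝ => |ξ| ^ (α - 1) * Real.exp (-(s * |ξ| ^ α) / 2)) :=
    integrable_rpow_mul_kernel hα1.le (by linarith) hs
  calc ∫ ξ : ℝ, gdiff α s ε ξ
      ≤ ∫ ξ : ℝ, (ε / 2) ^ ((α - 1) / α) * (|ξ| ^ (α - 1) * Real.exp (-(s * |ξ| ^ α) / 2)) := by
        apply integral_mono (gdiff_integrable hα1.le hs hε) (hint.const_mul _)
        intro ξ
        exact gdiff_le hα1 hα2 hs.le hε.le ξ
    _ = (ε / 2) ^ ((α - 1) / α) *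
        ((∫ u : ℝ, |u| ^ (α - 1) * Real.exp (-(1 * |u| ^ α) / 2)) / s) := by
        rw [integral_const_mul, scaled_integral hα1 hα2 hs]

end StableAux

open StableAux

/-- For fixed `a ∈ (0,1)` there is a finite constant `C` (depending only on `α`
and `a`) such that for all `ε ∈ (0,1)`:
`∫₀^{ε^a} s^{(α−1)/α} (∫_ℝ (p_{s+ε}(y) − p_s(y))² dy) ds ≤ C ε^{2a(α−1)/α}`. -/
theorem stmt_15 (α : ℝ) (hα : α ∈ Set.Ioc (1 : ℝ) 2)
    (a : ℝ) (ha : a ∈ Set.Ioo (0 : ℝ) 1) :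
    ∃ C : ℝ, ∀ ε ∈ Set.Ioo (0 : ℝ) 1,
      (∫ s in Set.Ioc (0 : ℝ) (ε ^ a),
          s ^ ((α - 1) / α)
            * ∫ y : ℝ, (stableKernel α (s + ε) y - stableKernel α s y) ^ 2)
        ≤ C * ε ^ (2 * a * (α - 1) / α) := by
  obtain ⟨hα1, hα2⟩ := hα
  obtain ⟨ha0, ha1⟩ := ha
  have hα0 : (0:ℝ) < α := by linarith
  set θ : ℝ := (α - 1) / α with hθ
  have hθ0 : 0 < θ := div_pos (by linarith) hα0
  have hθ1 : θ ≤ 1 := by rw [hθ, div_le_one hα0]; linarith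
  set c2 : ℝ := ∫ u : ℝ, |u| ^ (α - 1) * Real.exp (-(1 * |u| ^ α) / 2) with hc2
  have hc20 : 0 ≤ c2 := integral_nonneg fun u => by positivity
  refine ⟨(2 * π)⁻¹ * c2 / ((2:ℝ) ^ θ * θ), ?_⟩
  intro ε ⟨hε0, hε1⟩
  set r : ℝ := ε ^ a with hr
  have hr0 : 0 < r := Real.rpow_pos_of_pos hε0 _
  set Kε : ℝ := (2 * π)⁻¹ * ((ε / 2) ^ θ * c2) with hK
  have hK0 : 0 ≤ Kε := by
    rw [hK]
    have : (0:ℝ) ≤ (ε / 2) ^ θ := Real.rpow_nonneg (by positivity) _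
    positivity
  -- pointwise bound on the integrand
  have hpt : ∀ s ∈ Set.Ioc (0:ℝ) r,
      s ^ θ * (∫ y : ℝ, (stableKernel α (s + ε) y - stableKernel α s y) ^ 2)
        ≤ Kε * s ^ (-α⁻¹) := by
    rintro s ⟨hs0, _⟩
    have h1 := inner_bound hα1.le hs0 hε0
    have h2 := gdiff_integral_le hα1 hα2 hs0 hε0
    have hsθ : (0:ℝ) ≤ s ^ θ := Real.rpow_nonneg hs0.le _
    calc s ^ θ * (∫ y : ℝ, (stableKernel α (s + ε) y - stableKernel α s y) ^ 2)
        ≤ s ^ θ * ((2 * π)⁻¹ * ∫ ξ : ℝ, gdiff α s ε ξ) :=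
          mul_le_mul_of_nonneg_left h1 hsθ
      _ ≤ s ^ θ * ((2 * π)⁻¹ * ((ε / 2) ^ θ * (c2 / s))) := by
          apply mul_le_mul_of_nonneg_left ?_ hsθ
          apply mul_le_mul_of_nonneg_left ?_ (by positivity)
          rw [hc2]
          exact h2
      _ = Kε * (s ^ θ * s⁻¹) := by rw [hK]; ring
      _ = Kε * s ^ (-α⁻¹) := by
          congr 1
          rw [← Real.rpow_neg_one s, ← Real.rpow_add hs0]
          congr 1
          rw [hθ]
          field_simp
          ring
  -- integrability of the bound
  have hBint : IntegrableOn (fun s : ℝ => Kε * s ^ (-α⁻¹)) (Set.Ioc 0 r) := by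
    have h := (intervalIntegral.intervalIntegrable_rpow'
      (show (-1:ℝ) < -α⁻¹ by
        have : α⁻¹ < 1 := by rw [inv_lt_one_iff₀]; right; exact hα1
        linarith) (a := 0) (b := r))
    rw [intervalIntegrable_iff_integrableOn_Ioc_of_le hr0.le] at h
    exact h.const_mul _
  -- the outer integral bound
  have houter : (∫ s in Set.Ioc (0 : ℝ) r,
      s ^ θ * ∫ y : ℝ, (stableKernel α (s + ε) y - stableKernel α s y) ^ 2)
      ≤ ∫ s in Set.Ioc (0 : ℝ) r, Kε * s ^ (-α⁻¹) := by
    apply integral_mono_of_nonneg ?_ hBint ?_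
    · rw [EventuallyLE, ae_restrict_iff' measurableSet_Ioc]
      filter_upwards with s hs
      have h1 : (0:ℝ) ≤ s ^ θ := Real.rpow_nonneg hs.1.le _
      have h2 : (0:ℝ) ≤ ∫ y : ℝ, (stableKernel α (s + ε) y - stableKernel α s y) ^ 2 :=
        integral_nonneg fun y => sq_nonneg _
      exact mul_nonneg h1 h2
    · rw [EventuallyLE, ae_restrict_iff' measurableSet_Ioc]
      filter_upwards with s hs
      exact hpt s hs
  -- evaluate the bound integral
  have hBeval : (∫ s in Set.Ioc (0 : ℝ) r, Kε * s ^ (-α⁻¹)) = Kε * (r ^ θ / θ) := by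
    rw [integral_const_mul, ← intervalIntegral.integral_of_le hr0.le,
      integral_rpow (Or.inl (show (-1:ℝ) < -α⁻¹ by
        have : α⁻¹ < 1 := by rw [inv_lt_one_iff₀]; right; exact hα1
        linarith))]
    have he : -α⁻¹ + 1 = θ := by rw [hθ]; field_simp; ring
    rw [he, Real.zero_rpow (ne_of_gt hθ0)]
    ring
  -- final computation
  calc (∫ s in Set.Ioc (0 : ℝ) r,
        s ^ θ * ∫ y : ℝ, (stableKernel α (s + ε) y - stableKernel α s y) ^ 2)
      ≤ Kε * (r ^ θ / θ) := by rw [← hBeval]; exact houter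
    _ = (2 * π)⁻¹ * c2 / ((2:ℝ) ^ θ * θ) * (ε ^ θ * ε ^ (a * θ)) := by
        rw [hK, hr, ← Real.rpow_mul hε0.le, Real.div_rpow hε0.le (by norm_num)]
        have h2 : (0:ℝ) < (2:ℝ) ^ θ := Real.rpow_pos_of_pos (by norm_num) _
        field_simp
    _ ≤ (2 * π)⁻¹ * c2 / ((2:ℝ) ^ θ * θ) * ε ^ (2 * a * (α - 1) / α) := by
        apply mul_le_mul_of_nonneg_left ?_ ?_
        · rw [← Real.rpow_add hε0]
          have he : 2 * a * (α - 1) / α = 2 * a * θ := by rw [hθ]; ring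
          rw [he]
          apply Real.rpow_le_rpow_of_exponent_ge hε0 hε1.le
          nlinarith
        · have h2 : (0:ℝ) < (2:ℝ) ^ θ := Real.rpow_pos_of_pos (by norm_num) _
          positivity
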